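/- Let K ⊆ ℝⁿ be a convex body whose circumcenter c_K does not belong to int(K). Then for every δ > 0, the set K ∩ B°(c_K,δ) is not contained in ⋃_{x ∈ K ∩ bd(B(c_K,R(K)))} (K + (c_K − x)). -/

import Mathlib

open Metric Set
open scoped RealInnerProductSpace

/-- The quantified t-illumination number `i(K,ε)`: the least `m` for which there exist
unit vectors `r_1, …, r_m` such that every `x ∈ K` satisfies `x + ε • r_i ∈ K` for some `i`;
`∞` if no finite such family exists. -/
noncomputable def iq {n : ℕ} (K : Set (EuclideanSpace ℝ (Fin n))) (ε : ℝ) : ℕ∞ :=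
  sInf {m : ℕ∞ | ∃ s : Finset (EuclideanSpace ℝ (Fin n)), (s.card : ℕ∞) = m ∧
    (∀ r ∈ s, ‖r‖ = 1) ∧ ∀ x ∈ K, ∃ r ∈ s, x + ε • r ∈ K}

/-- The quantified illumination number `c(K,ε)`: the least `m` for which there exist
unit vectors `r_1, …, r_m` such that every `x ∈ K` satisfies `x + ε • r_i ∈ int K` for some `i`;
`∞` if no finite such family exists. -/
noncomputable def cq {n : ℕ} (K : Set (EuclideanSpace ℝ (Fin n))) (ε : ℝ) : ℕ∞ :=
  sInf {m : ℕ∞ | ∃ s : Finset (EuclideanSpace ℝ (Fin n)), (s.card : ℕ∞) = m ∧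
    (∀ r ∈ s, ‖r‖ = 1) ∧ ∀ x ∈ K, ∃ r ∈ s, x + ε • r ∈ interior K}

/-- `B(c, R)` is the circumball of `K`: a closed ball containing `K` of minimal radius. -/
def IsCircumball {n : ℕ} (K : Set (EuclideanSpace ℝ (Fin n)))
    (c : EuclideanSpace ℝ (Fin n)) (R : ℝ) : Prop :=
  K ⊆ closedBall c R ∧ ∀ (c' : EuclideanSpace ℝ (Fin n)) (R' : ℝ), K ⊆ closedBall c' R' → R ≤ R'

section Aux

variable {H : Type*} [NormedAddCommGroup H] [InnerProductSpace ℝ H] [CompleteSpace H]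

/-- The circumcenter of a compact convex set belongs to the set. -/
lemma circumcenter_mem_aux {K : Set H} (hKc : IsCompact K) (hKconv : Convex ℝ K)
    (hne : K.Nonempty) {c : H} {R : ℝ} (hsub : K ⊆ closedBall c R)
    (hmin : ∀ (c' : H) (R' : ℝ), K ⊆ closedBall c' R' → R ≤ R') : c ∈ K := by
  by_contra hcK
  obtain ⟨v, hvK, hv⟩ :=
    exists_norm_eq_iInf_of_complete_convex hne hKc.isClosed.isComplete hKconv c
  rw [norm_eq_iInf_iff_real_inner_le_zero hKconv hvK] at hv
  set d : ℝ := ‖v - c‖ with hd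
  have hd0 : 0 < d := by
    rw [hd, norm_pos_iff, sub_ne_zero]
    intro h; exact hcK (h ▸ hvK)
  have hdR : d ≤ R := by
    have := hsub hvK; rwa [mem_closedBall, dist_eq_norm] at this
  have hkey : ∀ x ∈ K, ‖x - v‖ ^ 2 ≤ R ^ 2 - d ^ 2 := by
    intro x hx
    have h1 : ‖x - v‖ ^ 2 = ‖x - c‖ ^ 2 - 2 * ⟪x - c, v - c⟫ + d ^ 2 := by
      have e : x - v = (x - c) - (v - c) := by abel
      rw [e, norm_sub_sq_real, hd]
    have h2 : d ^ 2 ≤ ⟪x - c, v - c⟫ := by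
      have e1 : ⟪x - c, v - c⟫ = ⟪x - v, v - c⟫ + ⟪v - c, v - c⟫ := by
        rw [← inner_add_left]; congr 1; abel
      have e2 : ⟪x - v, v - c⟫ = -⟪c - v, x - v⟫ := by
        rw [real_inner_comm, ← inner_neg_left]; congr 1; abel
      have e3 := hv x hx
      rw [e1, e2, real_inner_self_eq_norm_sq, ← hd]
      linarith
    have h3 : ‖x - c‖ ^ 2 ≤ R ^ 2 := by
      have := hsub hx
      rw [mem_closedBall, dist_eq_norm] at this
      exact pow_le_pow_left₀ (norm_nonneg _) this 2
    linarith
  have hRd : 0 ≤ R ^ 2 - d ^ 2 := by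
    obtain ⟨x, hx⟩ := hne
    have := hkey x hx
    nlinarith [sq_nonneg ‖x - v‖, norm_nonneg (x - v)]
  have hsub' : K ⊆ closedBall v (Real.sqrt (R ^ 2 - d ^ 2)) := by
    intro x hx
    rw [mem_closedBall, dist_eq_norm]
    rw [show ‖x - v‖ = Real.sqrt (‖x - v‖ ^ 2) by rw [Real.sqrt_sq (norm_nonneg _)]]
    exact Real.sqrt_le_sqrt (hkey x hx)
  have := hmin v _ hsub'
  have hlt : Real.sqrt (R ^ 2 - d ^ 2) < R := by
    have h0R : 0 ≤ R := le_trans hd0.le hdR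
    calc Real.sqrt (R ^ 2 - d ^ 2) < Real.sqrt (R ^ 2) :=
          Real.sqrt_lt_sqrt hRd (by nlinarith)
      _ = R := by rw [Real.sqrt_sq h0R]
  linarith

/-- The inner dual cone of a set (as a proper cone). -/
noncomputable abbrev Set.innerDualCone (s : Set H) : ProperCone ℝ H := ProperCone.innerDual s

lemma mem_innerDualCone (y : H) (s : Set H) :
    y ∈ s.innerDualCone ↔ ∀ x ∈ s, 0 ≤ ⟪x, y⟫ := ProperCone.mem_innerDual

lemma pointed_innerDualCone (s : Set H) : (0 : H) ∈ s.innerDualCone :=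
  (s.innerDualCone).zero_mem

lemma innerDualCone_empty : (∅ : Set H).innerDualCone = ⊤ := ProperCone.innerDual_empty

lemma innerDualCone_le_innerDualCone (s t : Set H) (h : t ⊆ s) :
    s.innerDualCone ≤ t.innerDualCone := ProperCone.innerDual_le_innerDual h

lemma isClosed_innerDualCone (s : Set H) : IsClosed (s.innerDualCone : Set H) :=
  (s.innerDualCone).isClosed

lemma ConvexCone.innerDualCone_of_innerDualCone_eq_self (C : ConvexCone ℝ H)
    (hne : (C : Set H).Nonempty) (hc : IsClosed (C : Set H)) :
    ((((C : Set H).innerDualCone : Set H).innerDualCone : Set H)) = (C : Set H) := by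
  obtain ⟨x, hx⟩ := hne
  have hP : C.Pointed := by
    have ht : Filter.Tendsto (fun t : ℝ => t • x) (nhdsWithin 0 (Set.Ioi 0)) (nhds 0) := by
      have : Filter.Tendsto (fun t : ℝ => t • x) (nhds 0) (nhds ((0:ℝ) • x)) :=
        (continuous_id.smul continuous_const).tendsto 0
      rw [zero_smul] at this
      exact this.mono_left nhdsWithin_le_nhds
    exact hc.mem_of_tendsto ht (eventually_nhdsWithin_of_forall fun t htp => C.smul_mem htp hx)
  let D : ProperCone ℝ H := ⟨C.toPointedCone hP, hc⟩
  exact congrArg (fun X : ProperCone ℝ H => (X : Set H)) (ProperCone.innerDual_innerDual D)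

/-- Key claim: if `c` is not interior to the convex body `K` and `F ⊆ K`, then there is
`y ∈ K`, `y ≠ c`, making a nonnegative inner product with every `x - c`, `x ∈ F`. -/
lemma exists_good_direction {K : Set H} (hKconv : Convex ℝ K)
    (hKint : (interior K).Nonempty) {c : H} {F : Set H} (hFK : F ⊆ K)
    (hc : c ∉ interior K) :
    ∃ y ∈ K, y ≠ c ∧ ∀ x ∈ F, 0 ≤ ⟪x - c, y - c⟫ := by
  by_contra hcon
  push_neg at hcon
  -- hcon : ∀ y ∈ K, y ≠ c → ∃ x ∈ F, ⟪x - c, y - c⟫ < 0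
  obtain ⟨p, hp⟩ := hKint
  set S : Set H := (fun x => x - c) '' F with hS
  set V : Set H := (fun y => y - c) '' interior K with hV
  have hVopen : IsOpen V := by
    have hm : IsOpenMap (fun y : H => y - c) := (Homeomorph.subRight c).isOpenMap
    exact hm _ isOpen_interior
  have hVconv : Convex ℝ V := by
    have : V = (fun y => -c + y) '' interior K := by
      simp only [hV, sub_eq_neg_add]
    rw [this]
    exact (hKconv.interior).translate (-c)
  have hdisj : Disjoint V ((S.innerDualCone : Set H)) := by
    rw [Set.disjoint_left]
    rintro v ⟨y, hy, rfl⟩ hvD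
    have hyK : y ∈ K := interior_subset hy
    have hyc : y ≠ c := fun h => hc (h ▸ hy)
    obtain ⟨x, hxF, hx⟩ := hcon y hyK hyc
    have := (mem_innerDualCone _ _).1 (SetLike.mem_coe.1 hvD) (x - c) ⟨x, hxF, rfl⟩
    linarith
  obtain ⟨f, u, hfV, hfD⟩ :=
    geometric_hahn_banach_open hVconv hVopen (S.innerDualCone.convex) hdisj
  have hu0 : u ≤ 0 := by
    have h0 : (0 : H) ∈ (S.innerDualCone : Set H) :=
      SetLike.mem_coe.2 (pointed_innerDualCone S)
    have := hfD 0 h0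
    simpa using this
  have hfD0 : ∀ b ∈ (S.innerDualCone : Set H), 0 ≤ f b := by
    intro b hb
    by_contra hfb
    push_neg at hfb
    have h2 : ∀ t : ℝ, 0 < t → u ≤ t * f b := by
      intro t ht
      have hm : t • b ∈ (S.innerDualCone : Set H) :=
        SetLike.mem_coe.2 (ProperCone.smul_mem _ (SetLike.mem_coe.1 hb) ht.le)
      have := hfD _ hm
      simpa [map_smul, smul_eq_mul] using this
    have h3 := h2 ((u - 1) / f b) (div_pos_of_neg_of_neg (by linarith) hfb)
    rw [div_mul_cancel₀ _ (ne_of_lt hfb)] at h3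
    linarith
  -- f is nonpositive on K - c
  have hfK : ∀ y ∈ K, f (y - c) ≤ 0 := by
    intro y hyK
    set g : ℝ → ℝ := fun t => f ((1 - t) • y + t • p - c) with hg
    have hgc : Continuous g := by
      apply f.continuous.comp
      continuity
    have hg0 : g 0 = f (y - c) := by simp [hg]
    have htend : Filter.Tendsto g (nhdsWithin 0 (Set.Ioi 0)) (nhds (g 0)) :=
      (hgc.tendsto 0).mono_left nhdsWithin_le_nhds
    have hev : ∀ᶠ t in nhdsWithin (0 : ℝ) (Set.Ioi 0), g t ≤ 0 := by
      filter_upwards [self_mem_nhdsWithin,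
        (nhdsWithin_le_nhds (Iio_mem_nhds one_pos) :
          Set.Iio (1 : ℝ) ∈ nhdsWithin 0 (Set.Ioi 0))] with t ht0 ht1
    -- t ∈ Ioi 0, t < 1
      have hmem : (1 - t) • y + t • p ∈ interior K :=
        hKconv.combo_self_interior_mem_interior hyK hp (by simp at ht0 ht1 ⊢; linarith)
          (by simpa using ht0) (by ring)
      have : ((1 - t) • y + t • p) - c ∈ V := ⟨_, hmem, rfl⟩
      have := hfV _ this
      simp only [hg]
      linarith
    have := le_of_tendsto htend hev
    rwa [hg0] at this
  -- Riesz representation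
  set w : H := (InnerProductSpace.toDual ℝ H).symm f with hw
  have hwf : ∀ x : H, ⟪w, x⟫ = f x := fun x => InnerProductSpace.toDual_symm_apply
  have hw0 : w = 0 := by
    rcases S.eq_empty_or_nonempty with hSe | ⟨s0, hs0⟩
    · -- S empty: dual cone is everything, so f ≥ 0 everywhere; also f (p - c) < u ≤ 0
      exfalso
      have : ∀ b : H, 0 ≤ f b := by
        intro b
        apply hfD0
        rw [hSe]
        simp [innerDualCone_empty]
      have h1 := this (p - c)
      have h2 := hfV (p - c) ⟨p, hp, rfl⟩
      linarith
    · set C : ConvexCone ℝ H := ((convex_convexHull ℝ S).toCone _).closure with hC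
      have hcoeC : (C : Set H) = closure (((convex_convexHull ℝ S).toCone _ : ConvexCone ℝ H) : Set H) := rfl
      have hSC : S ⊆ (C : Set H) := by
        intro x hx
        rw [hcoeC]
        exact subset_closure ((convex_convexHull ℝ S).subset_toCone (subset_convexHull ℝ S hx))
      have hCclosed : IsClosed (C : Set H) := by rw [hcoeC]; exact isClosed_closure
      have hCne : (C : Set H).Nonempty := ⟨s0, hSC hs0⟩
      -- dual of C equals dual of S
      have hdual : ((C : Set H).innerDualCone : Set H) = (S.innerDualCone : Set H) := by
        apply Set.Subset.antisymm
        · intro y hy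
          exact SetLike.mem_coe.2
            (SetLike.le_def.1 (innerDualCone_le_innerDualCone _ _ hSC) (SetLike.mem_coe.1 hy))
        · intro y hy
          rw [SetLike.mem_coe, mem_innerDualCone]
          intro z hz
          set P : ProperCone ℝ H := ({y} : Set H).innerDualCone with hP
          have hSP : S ⊆ (P : Set H) := by
            intro x hx
            rw [SetLike.mem_coe, mem_innerDualCone]
            rintro q rfl
            rw [real_inner_comm]
            exact (mem_innerDualCone _ _).1 (SetLike.mem_coe.1 hy) x hx
          have hhull : convexHull ℝ S ⊆ (P : Set H) :=
            convexHull_min hSP P.convex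
          have hcone : (((convex_convexHull ℝ S).toCone _ : ConvexCone ℝ H) : Set H) ⊆ (P : Set H) := by
            have hle : (convex_convexHull ℝ S).toCone _ ≤ (P : ConvexCone ℝ H) :=
              (convex_convexHull ℝ S).toCone_isLeast.2 hhull
            exact SetLike.coe_subset_coe.2 hle
          have hCP : (C : Set H) ⊆ (P : Set H) := by
            rw [hcoeC]
            exact closure_minimal hcone (isClosed_innerDualCone _)
          have := (mem_innerDualCone _ _).1 (SetLike.mem_coe.1 (hCP hz)) y rfl
          rwa [real_inner_comm]
      -- w is in the double dual of C, hence in C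
      have hwC : w ∈ (C : Set H) := by
        have hbid := C.innerDualCone_of_innerDualCone_eq_self hCne hCclosed
        rw [← hbid]
        rw [SetLike.mem_coe, mem_innerDualCone]
        intro b hb
        rw [real_inner_comm, hwf b]
        exact hfD0 b (hdual ▸ hb)
      -- but f is nonpositive on C
      have hCneg : ∀ z ∈ (C : Set H), f z ≤ 0 := by
        set N : Set H := {z | f z ≤ 0} with hN
        have hNclosed : IsClosed N := isClosed_le f.continuous continuous_const
        have hNconv : Convex ℝ N := by
          intro a ha b hb s t hs ht hst
          simp only [hN, Set.mem_setOf_eq, map_add, map_smul, smul_eq_mul] at *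
          nlinarith
        have hSN : S ⊆ N := by
          rintro q ⟨x, hxF, rfl⟩
          exact hfK x (hFK hxF)
        have hhullN : convexHull ℝ S ⊆ N := convexHull_min hSN hNconv
        have hconeN : (((convex_convexHull ℝ S).toCone _ : ConvexCone ℝ H) : Set H) ⊆ N := by
          intro z hz
          rw [SetLike.mem_coe, Convex.mem_toCone] at hz
          obtain ⟨a, ha, q, hq, rfl⟩ := hz
          have := hhullN hq
          simp only [hN, Set.mem_setOf_eq, map_smul, smul_eq_mul] at *
          exact mul_nonpos_of_nonneg_of_nonpos ha.le this
        intro z hz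
        have : z ∈ N := by
          rw [hcoeC] at hz
          exact closure_minimal hconeN hNclosed hz
        exact this
      have h1 : f w ≤ 0 := hCneg w hwC
      have h2 : ⟪w, w⟫ ≤ 0 := by rw [hwf]; exact h1
      exact real_inner_self_nonpos.1 h2
  -- w = 0 means f = 0, contradicting strict inequality on nonempty V
  have hf0 : f (p - c) = 0 := by
    rw [← hwf, hw0, inner_zero_left]
  have := hfV (p - c) ⟨p, hp, rfl⟩
  linarith

end Aux

/-- Lemma 4.2: if the circumcenter `c` of a convex body `K ⊆ ℝⁿ` is not interior to `K`, then
for every `δ > 0` the set `K ∩ B°(c,δ)` is not covered by the translates `K + (c - x)`,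
`x ∈ K ∩ bd B(c,R)`. -/
theorem circumcenter_not_interior_no_cover {n : ℕ} (K : Set (EuclideanSpace ℝ (Fin n)))
    (hKc : IsCompact K) (hKconv : Convex ℝ K) (hKint : (interior K).Nonempty)
    (c : EuclideanSpace ℝ (Fin n)) (R : ℝ) (hcirc : IsCircumball K c R)
    (hc : c ∉ interior K) :
    ∀ δ : ℝ, 0 < δ →
      ¬ (K ∩ ball c δ ⊆ ⋃ x ∈ K ∩ sphere c R, (· + (c - x)) '' K) := by
  intro δ hδ hsub
  have hKne : K.Nonempty := ⟨hKint.some, interior_subset hKint.some_mem⟩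
  have hcK : c ∈ K := circumcenter_mem_aux hKc hKconv hKne hcirc.1 hcirc.2
  obtain ⟨y, hyK, hyc, hy⟩ :=
    exists_good_direction hKconv hKint (Set.inter_subset_left : K ∩ sphere c R ⊆ K) hc
  set r : ℝ := ‖y - c‖ with hr
  have hr0 : 0 < r := by
    rw [hr, norm_pos_iff, sub_ne_zero]; exact hyc
  set t : ℝ := min (δ / (2 * r)) 1 with htdef
  have ht0 : 0 < t := lt_min (div_pos hδ (by positivity)) one_pos
  have ht1 : t ≤ 1 := min_le_right _ _
  set z : EuclideanSpace ℝ (Fin n) := c + t • (y - c) with hz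
  have hzK : z ∈ K := by
    have hmem : (1 - t) • c + t • y ∈ K :=
      hKconv hcK hyK (by linarith) ht0.le (by ring)
    have : (1 - t) • c + t • y = z := by
      rw [hz]; rw [sub_smul, smul_sub, one_smul]; abel
    rwa [this] at hmem
  have hzball : z ∈ ball c δ := by
    rw [mem_ball, dist_eq_norm]
    have h1 : ‖z - c‖ = t * r := by
      rw [hz, hr]
      simp only [add_sub_cancel_left]
      rw [norm_smul, Real.norm_eq_abs, abs_of_pos ht0]
    rw [h1]
    have h2 : t ≤ δ / (2 * r) := min_le_left _ _
    rw [le_div_iff₀ (by positivity : (0:ℝ) < 2 * r)] at h2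
    nlinarith
  have hzmem := hsub ⟨hzK, hzball⟩
  simp only [Set.mem_iUnion, exists_prop] at hzmem
  obtain ⟨x, hx, k, hkK, hk⟩ := hzmem
  -- hk : k + (c - x) = z
  have hxs : ‖x - c‖ = R := by
    have := hx.2
    rwa [mem_sphere, dist_eq_norm] at this
  have hkball : ‖k - c‖ ≤ R := by
    have := hcirc.1 hkK
    rwa [mem_closedBall, dist_eq_norm] at this
  have hkeq : k - c = (x - c) + t • (y - c) := by
    have : k = z - c + x := by
      have := hk
      rw [hz] at this ⊢
      have h := congrArg (fun q => q - (c - x)) this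
      simp only [add_sub_cancel_right] at h
      rw [h]; abel
    rw [this, hz]; abel
  have hIP : 0 ≤ ⟪x - c, y - c⟫ := hy x hx
  have hexp : ‖k - c‖ ^ 2 = R ^ 2 + 2 * (t * ⟪x - c, y - c⟫) + t ^ 2 * r ^ 2 := by
    rw [hkeq, norm_add_sq_real, real_inner_smul_right, hxs]
    congr 1
    rw [norm_smul, Real.norm_eq_abs, abs_of_pos ht0, mul_pow, hr]
  have h1 : ‖k - c‖ ^ 2 ≤ R ^ 2 := by
    have h0R : 0 ≤ R := hxs ▸ norm_nonneg _
    nlinarith [norm_nonneg (k - c)]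
  nlinarith [mul_nonneg ht0.le hIP, mul_pos (mul_pos ht0 ht0) (mul_pos hr0 hr0), sq_nonneg t]
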